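/- arXiv:0909.5240 — 3 statements merged into one kernel-verified Lean document; each statement's English description precedes it below -/
import Mathlib

section
/- Let c = 1 and let r₂ : ℝ → ℝ³ be a trajectory that is Lipschitz with constant v₁ < 1 on (-∞, t] (i.e. for all s, s̃ ≤ t, |r₂(s) - r₂(s̃)| ≤ v₁|s - s̃|). Then for any r₁ ∈ ℝ³ and t ∈ ℝ there exists a unique τ ≤ t satisfying τ = t - |r₁ - r₂(τ)|. -/
/-- Existence and uniqueness of the retarded time (c = 1). -/
theorem stmt_0 (r₂ : ℝ → EuclideanSpace ℝ (Fin 3)) (t : ℝ) (v₁ : ℝ)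
    (hv₀ : 0 ≤ v₁) (hv₁ : v₁ < 1)
    (hlip : ∀ s s' : ℝ, s ≤ t → s' ≤ t → ‖r₂ s - r₂ s'‖ ≤ v₁ * |s - s'|)
    (r₁ : EuclideanSpace ℝ (Fin 3)) :
    ∃! τ : ℝ, τ ≤ t ∧ τ = t - ‖r₁ - r₂ τ‖ := by
  set K : NNReal := ⟨v₁, hv₀⟩ with hKdef
  have hK : K < 1 := by exact_mod_cast hv₁
  have hne : Nonempty (Set.Iic t) := ⟨⟨t, le_refl t⟩⟩
  have hcs : CompleteSpace (Set.Iic t) := IsClosed.completeSpace_coe (hs := isClosed_Iic)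
  set g : Set.Iic t → Set.Iic t :=
    fun s => ⟨t - ‖r₁ - r₂ s.val‖, by
      simp only [Set.mem_Iic]
      exact sub_le_self _ (norm_nonneg _)⟩ with hgdef
  have hlg : LipschitzWith K g := by
    apply LipschitzWith.of_dist_le_mul
    intro x y
    have h1 : dist (g x) (g y) = |‖r₁ - r₂ y.val‖ - ‖r₁ - r₂ x.val‖| := by
      simp only [hgdef, Subtype.dist_eq, Real.dist_eq]
      ring_nf
    rw [h1, Subtype.dist_eq, Real.dist_eq]
    calc |‖r₁ - r₂ y.val‖ - ‖r₁ - r₂ x.val‖|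
        ≤ ‖(r₁ - r₂ y.val) - (r₁ - r₂ x.val)‖ := abs_norm_sub_norm_le _ _
      _ = ‖r₂ x.val - r₂ y.val‖ := by rw [sub_sub_sub_cancel_left]
      _ ≤ v₁ * |x.val - y.val| := hlip _ _ x.2 y.2
  have hcw : ContractingWith K g := ⟨hK, hlg⟩
  let τ₀ := hcw.fixedPoint g
  refine ⟨(hcw.fixedPoint g).val, ⟨(hcw.fixedPoint g).2, ?_⟩, ?_⟩
  · have := hcw.fixedPoint_isFixedPt
    have h := congrArg Subtype.val this
    exact h.symm
  · rintro τ ⟨hτle, hτeq⟩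
    have hfix : Function.IsFixedPt g ⟨τ, hτle⟩ := by
      apply Subtype.ext
      exact hτeq.symm
    have := hcw.fixedPoint_unique hfix
    exact congrArg Subtype.val this
end

section
/- Let r₂ : ℝ → ℝ³ be Lipschitz with constant v₁ < 1 on (-∞, t₁). For (r₁, t) with t < t₁ let τ(r₁, t) denote the unique solution of τ = t - |r₁ - r₂(τ)|. Then for all (r₁, t), (r̃₁, t̃) with t, t̃ < t₁: |τ(r₁,t) - τ(r̃₁,t̃)| ≤ (1/(1 - v₁))(|t - t̃| + |r₁ - r̃₁|). In particular τ is continuous on ℝ³ × ℝ. -/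
/-- The retarded time field is locally Lipschitzian, hence continuous. -/
theorem stmt_1 (r₂ : ℝ → EuclideanSpace ℝ (Fin 3)) (t₁ v₁ : ℝ)
    (hv₀ : 0 ≤ v₁) (hv₁ : v₁ < 1)
    (hlip : ∀ s s' : ℝ, s < t₁ → s' < t₁ → ‖r₂ s - r₂ s'‖ ≤ v₁ * |s - s'|)
    (τ : EuclideanSpace ℝ (Fin 3) → ℝ → ℝ)
    (hτ : ∀ r₁ t, t < t₁ → τ r₁ t ≤ t ∧ τ r₁ t = t - ‖r₁ - r₂ (τ r₁ t)‖) :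
    (∀ (r₁ r₁' : EuclideanSpace ℝ (Fin 3)) (t t' : ℝ), t < t₁ → t' < t₁ →
      |τ r₁ t - τ r₁' t'| ≤ (1 / (1 - v₁)) * (|t - t'| + ‖r₁ - r₁'‖)) ∧
    ContinuousOn (fun p : EuclideanSpace ℝ (Fin 3) × ℝ => τ p.1 p.2)
      {p : EuclideanSpace ℝ (Fin 3) × ℝ | p.2 < t₁} := by
  have h1v : (0:ℝ) < 1 - v₁ := by linarith
  have key : ∀ (r₁ r₁' : EuclideanSpace ℝ (Fin 3)) (t t' : ℝ), t < t₁ → t' < t₁ →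
      |τ r₁ t - τ r₁' t'| ≤ (1 / (1 - v₁)) * (|t - t'| + ‖r₁ - r₁'‖) := by
    intro r₁ r₁' t t' ht ht'
    obtain ⟨hle, heq⟩ := hτ r₁ t ht
    obtain ⟨hle', heq'⟩ := hτ r₁' t' ht'
    have hτt : τ r₁ t < t₁ := lt_of_le_of_lt hle ht
    have hτt' : τ r₁' t' < t₁ := lt_of_le_of_lt hle' ht'
    have hr2 : ‖r₂ (τ r₁ t) - r₂ (τ r₁' t')‖ ≤ v₁ * |τ r₁ t - τ r₁' t'| :=
      hlip _ _ hτt hτt'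
    have hnorm : |‖r₁ - r₂ (τ r₁ t)‖ - ‖r₁' - r₂ (τ r₁' t')‖|
        ≤ ‖r₁ - r₁'‖ + v₁ * |τ r₁ t - τ r₁' t'| := by
      have h2 := abs_norm_sub_norm_le (r₁ - r₂ (τ r₁ t)) (r₁' - r₂ (τ r₁' t'))
      have h3 : (r₁ - r₂ (τ r₁ t)) - (r₁' - r₂ (τ r₁' t'))
          = (r₁ - r₁') + (r₂ (τ r₁' t') - r₂ (τ r₁ t)) := by abel
      rw [h3] at h2
      have h4 := norm_add_le (r₁ - r₁') (r₂ (τ r₁' t') - r₂ (τ r₁ t))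
      have h5 : ‖r₂ (τ r₁' t') - r₂ (τ r₁ t)‖ ≤ v₁ * |τ r₁ t - τ r₁' t'| := by
        rw [norm_sub_rev]; exact hr2
      linarith
    have hdiff : τ r₁ t - τ r₁' t'
        = (t - t') - (‖r₁ - r₂ (τ r₁ t)‖ - ‖r₁' - r₂ (τ r₁' t')‖) := by
      linarith
    have habs : |τ r₁ t - τ r₁' t'| ≤ |t - t'| + ‖r₁ - r₁'‖ + v₁ * |τ r₁ t - τ r₁' t'| := by
      calc |τ r₁ t - τ r₁' t'|
          ≤ |t - t'| + |‖r₁ - r₂ (τ r₁ t)‖ - ‖r₁' - r₂ (τ r₁' t')‖| := by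
            rw [hdiff]; exact abs_sub _ _
        _ ≤ |t - t'| + (‖r₁ - r₁'‖ + v₁ * |τ r₁ t - τ r₁' t'|) := by linarith
        _ = _ := by ring
    rw [div_mul_eq_mul_div, le_div_iff₀ h1v]
    nlinarith [abs_nonneg (τ r₁ t - τ r₁' t')]
  refine ⟨key, ?_⟩
  rw [Metric.continuousOn_iff]
  intro x hx ε hε
  refine ⟨ε * (1 - v₁) / 2, by positivity, ?_⟩
  intro y hy hdist
  have hky := key y.1 x.1 y.2 x.2 hy hx
  have hd1 : ‖y.1 - x.1‖ ≤ dist y x := by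
    rw [Prod.dist_eq, ← dist_eq_norm]; exact le_max_left _ _
  have hd2 : |y.2 - x.2| ≤ dist y x := by
    rw [Prod.dist_eq, ← Real.dist_eq]; exact le_max_right _ _
  have : dist (τ y.1 y.2) (τ x.1 x.2) ≤ (1 / (1 - v₁)) * (2 * dist y x) := by
    rw [Real.dist_eq]
    refine hky.trans ?_
    have hpos : (0:ℝ) < 1 / (1 - v₁) := by positivity
    nlinarith
  have h2 : (1 / (1 - v₁)) * (2 * dist y x) < ε := by
    rw [div_mul_eq_mul_div, one_mul, div_lt_iff₀ h1v]
    nlinarith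
  exact lt_of_le_of_lt this h2
end

section
/- With the fundamental fields on G, the time derivative of z = (1 - ⟨e,v⟩)^{-1} is given by Dz = u z - 2u z² + z³⟨e,a⟩ + u z³ - u z³⟨v,v⟩. -/
open scoped RealInnerProductSpace

/-- Time derivative of z: Dz = uz - 2uz² + z³⟨e,a⟩ + uz³ - uz³⟨v,v⟩. -/
theorem stmt_10 (r₂ : ℝ → EuclideanSpace ℝ (Fin 3)) (hC : ContDiff ℝ 2 r₂)
    (hspeed : ∀ s : ℝ, ‖deriv r₂ s‖ < 1)
    (τ : EuclideanSpace ℝ (Fin 3) → ℝ → ℝ)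
    (hτ : ∀ x t, τ x t ≤ t ∧ τ x t = t - ‖x - r₂ (τ x t)‖)
    (r₁ : EuclideanSpace ℝ (Fin 3)) (t : ℝ) (hG : 0 < t - τ r₁ t)
    (hdiff : DifferentiableAt ℝ (fun s => τ r₁ s) t) :
    let u : ℝ := (t - τ r₁ t)⁻¹
    let e : EuclideanSpace ℝ (Fin 3) := (t - τ r₁ t)⁻¹ • (r₁ - r₂ (τ r₁ t))
    let v : EuclideanSpace ℝ (Fin 3) := deriv r₂ (τ r₁ t)
    let a : EuclideanSpace ℝ (Fin 3) := deriv (deriv r₂) (τ r₁ t)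
    let z : ℝ := (1 - ⟪e, v⟫)⁻¹
    deriv (fun s =>
        (1 - ⟪((s - τ r₁ s)⁻¹) • (r₁ - r₂ (τ r₁ s)), deriv r₂ (τ r₁ s)⟫)⁻¹) t =
      u * z - 2 * u * z ^ 2 + z ^ 3 * ⟪e, a⟫ + u * z ^ 3 - u * z ^ 3 * ⟪v, v⟫ := by
  intro u e v a z
  set T : ℝ := t - τ r₁ t with hTdef
  have hT0 : T ≠ 0 := ne_of_gt hG
  set R : ℝ → EuclideanSpace ℝ (Fin 3) := fun s => r₁ - r₂ (τ r₁ s) with hRdef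
  set τ' : ℝ := deriv (fun s => τ r₁ s) t with hτ'def
  have hτd : HasDerivAt (fun s => τ r₁ s) τ' t := hdiff.hasDerivAt
  have hr₂d : Differentiable ℝ r₂ := hC.differentiable (by norm_num)
  have hdr₂ : Differentiable ℝ (deriv r₂) := by
    have h2 : ContDiff ℝ ((1 : WithTop ℕ∞) + 1) r₂ := by
      convert hC using 2
      exact one_add_one_eq_two
    exact ((contDiff_succ_iff_deriv.mp h2).2.2).differentiable one_ne_zero
  -- derivative of R
  have hRd : HasDerivAt R (-(τ' • v)) t := by
    have h1 : HasDerivAt (fun s => r₂ (τ r₁ s)) (τ' • v) t :=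
      (hr₂d (τ r₁ t)).hasDerivAt.scomp t hτd
    have h := (hasDerivAt_const t r₁).sub h1
    rw [zero_sub] at h
    exact h
  -- derivative of T
  have hTd : HasDerivAt (fun s => s - τ r₁ s) (1 - τ') t :=
    (hasDerivAt_id t).sub hτd
  -- norm relations
  have hTR : ∀ s, s - τ r₁ s = ‖R s‖ := by
    intro s
    have := (hτ r₁ s).2
    simp only [hRdef]
    linarith
  have hnormR : ‖R t‖ = T := (hTR t).symm
  have hnorme : ‖e‖ = 1 := by
    show ‖T⁻¹ • R t‖ = 1
    rw [norm_smul, hnormR, norm_inv, Real.norm_eq_abs, abs_of_pos hG,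
      inv_mul_cancel₀ hT0]
  have hev_lt : ⟪e, v⟫ < 1 := by
    calc ⟪e, v⟫ ≤ ‖e‖ * ‖v‖ := real_inner_le_norm e v
    _ = ‖v‖ := by rw [hnorme, one_mul]
    _ < 1 := hspeed (τ r₁ t)
  have hc0 : (1 : ℝ) - ⟪e, v⟫ ≠ 0 := by linarith
  have hz : z = (1 - ⟪e, v⟫)⁻¹ := rfl
  -- the squared equation and derivative of τ
  have hsq : ∀ s, (s - τ r₁ s) ^ 2 = ⟪R s, R s⟫ := by
    intro s
    rw [real_inner_self_eq_norm_sq, hTR s]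
  have hInner1 : HasDerivAt (fun s => ⟪R s, R s⟫) (2 * T * (1 - τ')) t := by
    have := hTd.fun_pow 2
    have h2 : HasDerivAt (fun s => (s - τ r₁ s) ^ 2)
        (2 * T * (1 - τ')) t := by
      refine this.congr_deriv ?_
      push_cast
      rw [hTdef]; ring
    exact h2.congr_of_eventuallyEq (Filter.Eventually.of_forall fun s => (hsq s).symm)
  have hInner2 : HasDerivAt (fun s => ⟪R s, R s⟫)
      (⟪R t, -(τ' • v)⟫ + ⟪-(τ' • v), R t⟫) t := hRd.inner ℝ hRd
  have hkey : 2 * T * (1 - τ') = -(2 * τ' * ⟪R t, v⟫) := by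
    have := hInner1.unique hInner2
    rw [this, inner_neg_left, inner_neg_right, real_inner_smul_left,
      real_inner_smul_right, real_inner_comm (R t) v]
    ring
  -- relation ⟪R t, v⟫ = T * ⟪e,v⟫
  have hRv : ⟪R t, v⟫ = T * ⟪e, v⟫ := by
    show ⟪R t, v⟫ = T * ⟪T⁻¹ • R t, v⟫
    rw [real_inner_smul_left]
    field_simp
  have hτ'z : τ' = z := by
    rw [hz]
    rw [hRv] at hkey
    have h1 : T * (2 * (1 - τ') + 2 * τ' * ⟪e, v⟫) = 0 := by linarith [hkey]
    have h2 : 2 * (1 - τ') + 2 * τ' * ⟪e, v⟫ = 0 := by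
      rcases mul_eq_zero.mp h1 with h | h
      · exact absurd h hT0
      · exact h
    have h3 : τ' * (1 - ⟪e, v⟫) = 1 := by linarith
    exact eq_inv_of_mul_eq_one_left h3
  -- derivative of the main function
  have hw : HasDerivAt (fun s => deriv r₂ (τ r₁ s)) (τ' • a) t :=
    (hdr₂ (τ r₁ t)).hasDerivAt.scomp t hτd
  have hTinv : HasDerivAt (fun s => (s - τ r₁ s)⁻¹) (-(1 - τ') / T ^ 2) t :=
    hTd.inv hT0
  have hsmul : HasDerivAt (fun s => ((s - τ r₁ s)⁻¹) • R s)
      (T⁻¹ • (-(τ' • v)) + (-(1 - τ') / T ^ 2) • R t) t := hTinv.smul hRd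
  have hg : HasDerivAt (fun s => ⟪((s - τ r₁ s)⁻¹) • R s, deriv r₂ (τ r₁ s)⟫)
      (⟪T⁻¹ • R t, τ' • a⟫ + ⟪T⁻¹ • (-(τ' • v)) + (-(1 - τ') / T ^ 2) • R t,
        deriv r₂ (τ r₁ t)⟫) t := hsmul.inner ℝ hw
  set g' : ℝ := ⟪T⁻¹ • R t, τ' • a⟫ + ⟪T⁻¹ • (-(τ' • v)) + (-(1 - τ') / T ^ 2) • R t,
    deriv r₂ (τ r₁ t)⟫ with hg'def
  have hone : HasDerivAt (fun s =>
      1 - ⟪((s - τ r₁ s)⁻¹) • R s, deriv r₂ (τ r₁ s)⟫) (-g') t := by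
    have h := (hasDerivAt_const t (1:ℝ)).sub hg
    rw [zero_sub] at h
    exact h
  have hval : (1 : ℝ) - ⟪(T⁻¹ : ℝ) • R t, deriv r₂ (τ r₁ t)⟫ = 1 - ⟪e, v⟫ := rfl
  have hF : HasDerivAt (fun s =>
      (1 - ⟪((s - τ r₁ s)⁻¹) • R s, deriv r₂ (τ r₁ s)⟫)⁻¹)
      (-(-g') / (1 - ⟪e, v⟫) ^ 2) t := by
    have := hone.inv (by rw [hval]; exact hc0)
    rwa [hval] at this
  rw [hF.deriv]
  -- now pure algebra
  have hRa : ⟪R t, a⟫ = T * ⟪e, a⟫ := by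
    show ⟪R t, a⟫ = T * ⟪T⁻¹ • R t, a⟫
    rw [real_inner_smul_left]
    field_simp
  have hg'val : g' = T⁻¹ * τ' * (T * ⟪e, a⟫) - T⁻¹ * τ' * ⟪v, v⟫
      + (-(1 - τ') / T ^ 2) * (T * ⟪e, v⟫) := by
    have hv' : deriv r₂ (τ r₁ t) = v := rfl
    simp only [hg'def, hv', inner_add_left, inner_neg_left, real_inner_smul_left,
      real_inner_smul_right]
    rw [hRa, hRv]
    ring
  rw [hg'val, hτ'z, hz]
  have hu : u = T⁻¹ := rfl
  rw [hu]
  set c : ℝ := ⟪e, v⟫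
  have hc : (1 : ℝ) - c ≠ 0 := hc0
  field_simp
  ring
end
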